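/- Let E be a finite-dimensional real inner product space, let f : E → ℝ be locally Lipschitz, and let x̄ ∈ E. Assume f grows quadratically at x̄: there are δ > 0 and ρ' > 0 with f(x) − f(x̄) ≥ (δ/2)·‖x − x̄‖² whenever ‖x − x̄‖ ≤ ρ'. Assume further that f has the Goldstein property at x̄ with proportionality bracket [μ, ν]: there are constants ν > μ > 0, θ ∈ (0,1) and ρ > 0 such that for every x with 0 < ‖x − x̄‖ ≤ ρ and every ε with μ·‖x − x̄‖ ≤ ε ≤ ν·‖x − x̄‖, the Goldstein subgradient g_ε(x) is nonzero and the point x⁺ := x − (ε/‖g_ε(x)‖)·g_ε(x) satisfies f(x⁺) − f(x̄) ≤ θ·(f(x) − f(x̄)) or ‖x⁺ − x̄‖ ≤ θ·‖x − x̄‖. Then there exists η > 0 with the following property: for every sequence (x_r)_{r≥0} with ‖x₀ − x̄‖ ≤ η such that for each r either x_r = x̄ and x_{r+1} = x̄, or x_r ≠ x̄ and x_{r+1} = x_r − (ε_r/‖g_{ε_r}(x_r)‖)·g_{ε_r}(x_r) for some ε_r with μ·‖x_r − x̄‖ ≤ ε_r ≤ ν·‖x_r − x̄‖, there exist constants a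 > 0 and b > 0 with ‖x_r − x̄‖ ≤ a·exp(−b·√r) for all r ≥ 0. -/

import Mathlib

open Filter Topology Metric Set
open scoped Classical

variable {E : Type*} [NormedAddCommGroup E] [InnerProductSpace ℝ E] [FiniteDimensional ℝ E]

/-- The Clarke subdifferential: the closed convex hull of all limits of gradients
along sequences of points of differentiability converging to `x`. -/
noncomputable def clarkeSubdiff (f : E → ℝ) (x : E) : Set E :=
  closure (convexHull ℝ {v : E | ∃ u : ℕ → E,
    (∀ n, DifferentiableAt ℝ f (u n)) ∧
    Tendsto u atTop (𝓝 x) ∧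
    Tendsto (fun n => gradient f (u n)) atTop (𝓝 v)})

/-- The Goldstein subdifferential of radius `ε`. -/
noncomputable def goldsteinSubdiff (f : E → ℝ) (x : E) (ε : ℝ) : Set E :=
  convexHull ℝ (⋃ y ∈ Metric.closedBall x ε, clarkeSubdiff f y)

/-- The element of minimal norm of a set (junk value `0` if no minimizer exists). -/
noncomputable def minNorm (s : Set E) : E :=
  if h : ∃ v, v ∈ s ∧ ∀ w ∈ s, ‖v‖ ≤ ‖w‖ then h.choose else 0

/-- The Goldstein subgradient: the minimal-norm element of the Goldstein subdifferential. -/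
noncomputable def goldsteinGrad (f : E → ℝ) (x : E) (ε : ℝ) : E :=
  minNorm (goldsteinSubdiff f x ε)

/-- The Goldstein modulus `Γf(x) = inf {ε ≥ 0 : ‖g_ε(x)‖ ≤ ε}`. -/
noncomputable def goldsteinModulus (f : E → ℝ) (x : E) : ℝ :=
  sInf {ε : ℝ | 0 ≤ ε ∧ ‖goldsteinGrad f x ε‖ ≤ ε}


section auxiliary
open MeasureTheory
open scoped NNReal

set_option linter.unusedSectionVars false

lemma minNorm_spec {s : Set E} (h : minNorm s ≠ 0) :
    minNorm s ∈ s ∧ ∀ w ∈ s, ‖minNorm s‖ ≤ ‖w‖ := by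
  by_cases hex : ∃ v, v ∈ s ∧ ∀ w ∈ s, ‖v‖ ≤ ‖w‖
  · rw [minNorm, dif_pos hex]
    exact hex.choose_spec
  · rw [minNorm, dif_neg hex] at h
    exact absurd rfl h

lemma minNorm_inner_ge {s : Set E} (hconv : Convex ℝ s) (h : minNorm s ≠ 0) :
    ∀ w ∈ s, ‖minNorm s‖ ^ 2 ≤ inner ℝ (minNorm s) w := by
  obtain ⟨hmem, hmin⟩ := minNorm_spec h
  set g := minNorm s with hg
  intro w hw
  have key : (0:ℝ) ≤ inner ℝ g (w - g) := by
    by_contra hc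
    push_neg at hc
    set c : ℝ := inner ℝ g (w - g) with hcdef
    have hwg : w - g ≠ 0 := by
      intro h0
      rw [h0, inner_zero_right] at hcdef
      rw [hcdef] at hc
      exact absurd hc (lt_irrefl 0)
    have hn : (0:ℝ) < ‖w - g‖ ^ 2 := pow_pos (norm_pos_iff.2 hwg) 2
    set t : ℝ := min 1 (-c / ‖w - g‖ ^ 2) with ht
    have ht0 : 0 < t := lt_min one_pos (div_pos (by linarith) hn)
    have ht1 : t ≤ 1 := min_le_left _ _
    have htc : t * ‖w - g‖ ^ 2 ≤ -c := by
      have := min_le_right 1 (-c / ‖w - g‖ ^ 2)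
      calc t * ‖w - g‖ ^ 2 ≤ (-c / ‖w - g‖ ^ 2) * ‖w - g‖ ^ 2 := by
            apply mul_le_mul_of_nonneg_right this hn.le
        _ = -c := by field_simp
    have hmems : g + t • (w - g) ∈ s := by
      have : g + t • (w - g) = (1 - t) • g + t • w := by
        rw [smul_sub]; module
      rw [this]
      exact hconv hmem hw (by linarith) ht0.le (by ring)
    have hineq := hmin _ hmems
    have hsq : ‖g‖ ^ 2 ≤ ‖g + t • (w - g)‖ ^ 2 := by
      exact pow_le_pow_left₀ (norm_nonneg _) hineq 2
    have hexp : ‖g + t • (w - g)‖ ^ 2 = ‖g‖ ^ 2 + 2 * (t * c) + t ^ 2 * ‖w - g‖ ^ 2 := by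
      rw [norm_add_sq_real, real_inner_smul_right, norm_smul]
      simp [Real.norm_eq_abs, abs_of_pos ht0]
      ring
    nlinarith [mul_le_mul_of_nonneg_left htc ht0.le]
  have : inner ℝ g w = ‖g‖ ^ 2 + inner ℝ g (w - g) := by
    rw [inner_sub_right, real_inner_self_eq_norm_sq]; ring
  linarith

lemma goldstein_descent {f gt : E → ℝ} {L : ℝ≥0} {x xbar : E} {r0 ε : ℝ}
    (hlip : LipschitzWith L gt) (heq : Set.EqOn f gt (Metric.ball xbar r0))
    (hball : Metric.closedBall x ε ⊆ Metric.ball xbar r0)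
    (hε : 0 < ε) (hg : goldsteinGrad f x ε ≠ 0) :
    f (x - (ε / ‖goldsteinGrad f x ε‖) • goldsteinGrad f x ε) ≤ f x := by
  classical
  letI : MeasurableSpace E := borel E
  haveI : BorelSpace E := ⟨rfl⟩
  set μ : Measure E := (stdOrthonormalBasis ℝ E).toBasis.addHaar with hμdef
  set g := goldsteinGrad f x ε with hgdef
  set S := goldsteinSubdiff f x ε with hSdef
  obtain ⟨gmem, gmin⟩ := minNorm_spec (s := S) hg
  have hVI : ∀ w ∈ S, ‖g‖ ^ 2 ≤ inner ℝ g w :=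
    minNorm_inner_ge (convex_convexHull ℝ _) hg
  have ng : (0:ℝ) < ‖g‖ := norm_pos_iff.2 hg
  -- gradients of gt at differentiability points in the ball belong to S
  have hgradmem : ∀ y ∈ Metric.closedBall x ε, DifferentiableAt ℝ gt y →
      ‖g‖ ^ 2 ≤ inner ℝ g (gradient gt y) := by
    intro y hy hdy
    have hyball : y ∈ Metric.ball xbar r0 := hball hy
    have hev : f =ᶠ[𝓝 y] gt := heq.eventuallyEq_of_mem (isOpen_ball.mem_nhds hyball)
    have hdf : DifferentiableAt ℝ f y := hdy.congr_of_eventuallyEq hev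
    have hgradeq : gradient f y = gradient gt y := by
      rw [gradient, gradient, hev.fderiv_eq]
    have hmem : gradient f y ∈ clarkeSubdiff f y := by
      apply subset_closure
      apply subset_convexHull
      exact ⟨fun _ => y, fun _ => hdf, tendsto_const_nhds, tendsto_const_nhds⟩
    have hmemS : gradient f y ∈ S := by
      rw [hSdef, goldsteinSubdiff]
      exact subset_convexHull ℝ _ (Set.mem_biUnion hy hmem)
    rw [← hgradeq]
    exact hVI _ hmemS
  -- Rademacher
  have hrad : ∀ᵐ y ∂μ, DifferentiableAt ℝ gt y := hlip.ae_differentiableAt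
  have htrans : ∀ c : E, ∀ᵐ z ∂μ, DifferentiableAt ℝ gt (z + c) := fun c =>
    (measurePreserving_add_right μ c).quasiMeasurePreserving.ae hrad
  -- the main estimate for each σ
  have main : ∀ σ : ℝ, 0 < σ → σ < ε →
      gt (x + ((ε - σ) / ‖g‖) • (-g)) ≤ gt x + 2 * L * σ := by
    intro σ hσ hσε
    set s : ℝ := ε - σ with hsdef
    have hs : 0 < s := by simp [hsdef]; linarith
    set vs : E := (s / ‖g‖) • (-g) with hvs
    have hnvs : ‖vs‖ = s := by
      rw [hvs, norm_smul, norm_neg]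
      rw [Real.norm_eq_abs, abs_of_pos (by positivity)]
      field_simp
    set μ' : Measure E := μ.restrict (Metric.closedBall (0:E) σ) with hμ'
    haveI : IsFiniteMeasure μ' := by
      constructor
      rw [Measure.restrict_apply_univ]
      exact (isCompact_closedBall _ _).measure_lt_top
    set F : ℝ → E → ℝ := fun t z => gt (x + z + t • vs) with hF
    set D : ℝ → E → ℝ := fun t z => inner ℝ (gradient gt (x + z + t • vs)) vs with hD
    -- measurability of D
    have hgradmeas : Measurable fun y : E => gradient gt y := by
      have h1 : Measurable fun y : E => (InnerProductSpace.toDual ℝ E).symm (fderiv ℝ gt y) :=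
        (InnerProductSpace.toDual ℝ E).symm.continuous.measurable.comp (measurable_fderiv ℝ gt)
      exact h1
    have hDmeas : ∀ t : ℝ, AEStronglyMeasurable (D t) μ' := by
      intro t
      apply Measurable.aestronglyMeasurable
      have hline : Measurable fun z : E => x + z + t • vs :=
        ((continuous_const.add continuous_id).add continuous_const).measurable
      have hinner : Measurable fun y : E => (inner ℝ (gradient gt y) vs : ℝ) :=
        ((Continuous.inner continuous_id continuous_const).measurable).comp hgradmeas
      exact hinner.comp hline
    have hFint : ∀ t : ℝ, Integrable (F t) μ' := by
      intro t
      have hcont : Continuous (F t) :=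
        hlip.continuous.comp (((continuous_const.add continuous_id).add continuous_const))
      exact hcont.continuousOn.integrableOn_compact (isCompact_closedBall _ _)
    have key : ∀ t₀ : ℝ, Integrable (D t₀) μ' ∧
        HasDerivAt (fun t => ∫ z, F t z ∂μ') (∫ z, D t₀ z ∂μ') t₀ := by
      intro t₀
      have hdiffae : ∀ᵐ z ∂μ', HasDerivAt (fun t => F t z) (D t₀ z) t₀ := by
        apply ae_restrict_of_ae
        filter_upwards [htrans (x + t₀ • vs)] with z hz
        have hpt : DifferentiableAt ℝ gt (x + z + t₀ • vs) := by
          have h4 : x + z + t₀ • vs = z + (x + t₀ • vs) := by abel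
          rwa [h4]
        have hc : HasDerivAt (fun t : ℝ => x + z + t • vs) vs t₀ := by
          simpa using ((hasDerivAt_id t₀).smul_const vs).const_add (x + z)
        have h2 := hpt.hasFDerivAt.comp_hasDerivAt t₀ hc
        have h3 : D t₀ z = fderiv ℝ gt (x + z + t₀ • vs) vs := by
          show (inner ℝ (gradient gt (x + z + t₀ • vs)) vs : ℝ) = _
          simp only [gradient]
          rw [InnerProductSpace.toDual_symm_apply]
        rw [h3]
        exact h2
      exact hasDerivAt_integral_of_dominated_loc_of_lip (bound := fun _ => (L:ℝ) * s) (Metric.ball_mem_nhds t₀ one_pos)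
        (Eventually.of_forall fun t =>
          ((hlip.continuous.comp
            (((continuous_const.add continuous_id).add continuous_const))).measurable.comp
              measurable_id).aestronglyMeasurable)
        (hFint t₀) (hDmeas t₀)
        (Eventually.of_forall fun z => by
          have h1 : LipschitzWith (L * ‖vs‖₊) fun t : ℝ => gt (x + z + t • vs) := by
            apply hlip.comp
            apply LipschitzWith.of_dist_le_mul
            intro a b
            rw [dist_eq_norm, Real.dist_eq]
            have h5 : (x + z + a • vs) - (x + z + b • vs) = (a - b) • vs := by
              rw [sub_smul]; abel
            rw [h5, norm_smul, Real.norm_eq_abs]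
            rw [coe_nnnorm, mul_comm]
          have heqc : (L * ‖vs‖₊ : ℝ≥0) = Real.nnabs ((L:ℝ) * s) := by
            apply NNReal.coe_injective
            rw [Real.coe_nnabs, abs_of_nonneg (by positivity)]
            push_cast
            rw [hnvs]
          show LipschitzOnWith (Real.nnabs ((L:ℝ) * s)) (fun t : ℝ => gt (x + z + t • vs))
            (Metric.ball t₀ 1)
          rw [← heqc]
          exact h1.lipschitzOnWith)
        (integrable_const _) hdiffae
    set I : ℝ → ℝ := fun t => ∫ z, F t z ∂μ' with hIdef
    set V : ℝ := (μ (Metric.closedBall (0:E) σ)).toReal with hV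
    have hμ'univ : (μ' Set.univ) = μ (Metric.closedBall (0:E) σ) :=
      Measure.restrict_apply_univ _
    have hVpos : 0 < V := by
      rw [hV]
      apply ENNReal.toReal_pos
      · exact (measure_closedBall_pos μ 0 hσ).ne'
      · exact ((isCompact_closedBall _ _).measure_lt_top).ne
    have hDbound : ∀ t₀ ∈ Set.Icc (0:ℝ) 1, ∫ z, D t₀ z ∂μ' ≤ (-(s * ‖g‖)) * V := by
      intro t₀ ht₀
      have hae : ∀ᵐ z ∂μ', D t₀ z ≤ -(s * ‖g‖) := by
        filter_upwards [ae_restrict_of_ae (htrans (x + t₀ • vs)),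
          ae_restrict_mem measurableSet_closedBall] with z hz hzball
        have hpt : DifferentiableAt ℝ gt (x + z + t₀ • vs) := by
          have h4 : x + z + t₀ • vs = z + (x + t₀ • vs) := by abel
          rwa [h4]
        have hznorm : ‖z‖ ≤ σ := by
          simpa [dist_eq_norm] using hzball
        have hptball : x + z + t₀ • vs ∈ Metric.closedBall x ε := by
          rw [Metric.mem_closedBall, dist_eq_norm]
          have h4 : x + z + t₀ • vs - x = z + t₀ • vs := by abel
          rw [h4]
          calc ‖z + t₀ • vs‖ ≤ ‖z‖ + ‖t₀ • vs‖ := norm_add_le _ _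
            _ ≤ σ + s := by
                apply add_le_add hznorm
                rw [norm_smul, Real.norm_eq_abs, abs_of_nonneg ht₀.1, hnvs]
                calc t₀ * s ≤ 1 * s := by apply mul_le_mul_of_nonneg_right ht₀.2 hs.le
                  _ = s := one_mul s
            _ = ε := by rw [hsdef]; ring
        have h5 := hgradmem _ hptball hpt
        have h6 : D t₀ z = -((s / ‖g‖) * inner ℝ g (gradient gt (x + z + t₀ • vs))) := by
          show (inner ℝ (gradient gt (x + z + t₀ • vs)) vs : ℝ) = _
          conv_lhs => rw [hvs]
          rw [real_inner_smul_right, inner_neg_right, real_inner_comm]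
          ring
        rw [h6]
        have h7 : s * ‖g‖ = (s / ‖g‖) * ‖g‖ ^ 2 := by
          field_simp
        rw [h7]
        apply neg_le_neg
        apply mul_le_mul_of_nonneg_left h5 (by positivity)
      calc ∫ z, D t₀ z ∂μ' ≤ ∫ _, -(s * ‖g‖) ∂μ' :=
            integral_mono_ae (key t₀).1 (integrable_const _) hae
        _ = (-(s * ‖g‖)) * V := by
            rw [integral_const, measureReal_def, hμ'univ, ← hV, smul_eq_mul, mul_comm]
    have hIcont : ContinuousOn I (Set.Icc 0 1) := fun t _ =>
      ((key t).2.continuousAt).continuousWithinAt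
    obtain ⟨c, hc, hceq⟩ := exists_hasDerivAt_eq_slope I (fun t => ∫ z, D t z ∂μ')
      one_pos hIcont (fun t _ => (key t).2)
    have hI10 : I 1 ≤ I 0 := by
      have h6 := hDbound c ⟨hc.1.le, hc.2.le⟩
      rw [hceq] at h6
      have h8 : (-(s * ‖g‖)) * V ≤ 0 := by
        apply mul_nonpos_of_nonpos_of_nonneg
        · simp; positivity
        · exact hVpos.le
      have h9 : (I 1 - I 0) / (1 - 0) ≤ 0 := le_trans h6 h8
      rw [sub_zero, div_one] at h9
      linarith
    have hend : ∀ t : ℝ, |I t - V * gt (x + t • vs)| ≤ (L:ℝ) * σ * V := by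
      intro t
      have heq2 : I t - V * gt (x + t • vs) = ∫ z, (F t z - gt (x + t • vs)) ∂μ' := by
        rw [integral_sub (hFint t) (integrable_const _), integral_const, measureReal_def, hμ'univ, ← hV,
          smul_eq_mul]
      rw [heq2]
      have hb : ∀ᵐ z ∂μ', ‖F t z - gt (x + t • vs)‖ ≤ (L:ℝ) * σ := by
        filter_upwards [ae_restrict_mem measurableSet_closedBall] with z hzball
        have hznorm : ‖z‖ ≤ σ := by simpa [dist_eq_norm] using hzball
        have hd := hlip.dist_le_mul (x + z + t • vs) (x + t • vs)
        rw [Real.dist_eq, dist_eq_norm] at hd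
        have h4 : x + z + t • vs - (x + t • vs) = z := by abel
        rw [h4] at hd
        rw [Real.norm_eq_abs]
        calc |F t z - gt (x + t • vs)| ≤ (L:ℝ) * ‖z‖ := hd
          _ ≤ (L:ℝ) * σ := by apply mul_le_mul_of_nonneg_left hznorm L.coe_nonneg
      have h10 := norm_integral_le_of_norm_le_const hb
      rw [measureReal_def, hμ'univ, ← hV] at h10
      rw [← Real.norm_eq_abs]
      exact h10
    have e0 := hend 0
    have e1 := hend 1
    have h0' : x + (0:ℝ) • vs = x := by simp
    have h1' : x + (1:ℝ) • vs = x + vs := by simp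
    rw [h0'] at e0
    rw [h1'] at e1
    have habs0 := abs_le.1 e0
    have habs1 := abs_le.1 e1
    have hfin : V * gt (x + vs) ≤ V * (gt x + 2 * L * σ) := by nlinarith
    have := le_of_mul_le_mul_left hfin hVpos
    exact this
  -- now conclude from `main`
  have hxplus_mem : x - (ε / ‖g‖) • g ∈ Metric.closedBall x ε := by
    rw [Metric.mem_closedBall, dist_eq_norm]
    have h4 : x - (ε / ‖g‖) • g - x = -((ε / ‖g‖) • g) := by abel
    rw [h4, norm_neg, norm_smul, Real.norm_eq_abs, abs_of_nonneg (by positivity)]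
    rw [div_mul_cancel₀]
    exact ng.ne'
  have hxmem : x ∈ Metric.closedBall x ε := Metric.mem_closedBall_self hε.le
  have hfx : f x = gt x := heq (hball hxmem)
  have hfxp : f (x - (ε / ‖g‖) • g) = gt (x - (ε / ‖g‖) • g) := heq (hball hxplus_mem)
  rw [hfx, hfxp]
  apply le_of_forall_pos_le_add
  intro c hc
  set σ := min (ε / 2) (c / (3 * (L:ℝ) + 1)) with hσdef
  have hσ0 : 0 < σ := lt_min (by linarith) (by positivity)
  have hσε : σ < ε := lt_of_le_of_lt (min_le_left _ _) (by linarith)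
  have h7 := main σ hσ0 hσε
  have hstep : gt (x - (ε / ‖g‖) • g) ≤ gt (x + ((ε - σ) / ‖g‖) • (-g)) + (L:ℝ) * σ := by
    have hd := hlip.dist_le_mul (x - (ε / ‖g‖) • g) (x + ((ε - σ) / ‖g‖) • (-g))
    rw [Real.dist_eq, dist_eq_norm] at hd
    have hdiff : (x - (ε / ‖g‖) • g) - (x + ((ε - σ) / ‖g‖) • (-g)) = -((σ / ‖g‖) • g) := by
      rw [smul_neg]
      have h8 : (ε / ‖g‖) • g = ((ε - σ) / ‖g‖) • g + (σ / ‖g‖) • g := by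
        rw [← add_smul]
        congr 1
        field_simp
        ring
      rw [h8]; abel
    rw [hdiff, norm_neg, norm_smul, Real.norm_eq_abs, abs_of_nonneg (div_nonneg hσ0.le ng.le),
      div_mul_cancel₀ _ ng.ne'] at hd
    have := abs_le.1 hd
    linarith [this.1, this.2]
  have hLσ : 3 * (L:ℝ) * σ ≤ c := by
    have hσc : σ ≤ c / (3 * (L:ℝ) + 1) := min_le_right _ _
    have h9 : 3 * (L:ℝ) * σ ≤ 3 * (L:ℝ) * (c / (3 * (L:ℝ) + 1)) :=
      mul_le_mul_of_nonneg_left hσc (by positivity)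
    have h10 : 3 * (L:ℝ) * (c / (3 * (L:ℝ) + 1)) ≤ c := by
      rw [mul_div_assoc']
      rw [div_le_iff₀ (by positivity)]
      nlinarith [L.coe_nonneg, hc]
    linarith
  linarith

end auxiliary

set_option maxHeartbeats 1600000 in
lemma seq_rate (d F : ℕ → ℝ) (δ LL ν θ R η : ℝ)
    (hδ : 0 < δ) (hLL : 0 < LL) (hν : 0 < ν) (hθ₀ : 0 < θ) (hθ₁ : θ < 1)
    (hRpos : 0 < R) (hηpos : 0 < η) (hηR : η ≤ R) (hηL : LL * η ≤ δ * R ^ 2 / 2)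
    (hd0 : d 0 ≤ η)
    (hdnn : ∀ r, 0 ≤ d r)
    (hgrowth : ∀ r, d r ≤ (1 + ν) * R → δ / 2 * d r ^ 2 ≤ F r)
    (hFlip : F 0 ≤ LL * d 0)
    (hzero : ∀ r, d r = 0 → d (r + 1) = 0 ∧ F (r + 1) = 0)
    (hstep : ∀ r, 0 < d r → d r ≤ R →
      F (r + 1) ≤ F r ∧ d (r + 1) ≤ (1 + ν) * d r ∧
        (F (r + 1) ≤ θ * F r ∨ d (r + 1) ≤ θ * d r)) :
    ∃ a > 0, ∃ b > 0, ∀ r : ℕ, d r ≤ a * Real.exp (-b * Real.sqrt r) := by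
  have honeν : (1:ℝ) < 1 + ν := by linarith
  have hηνR : η ≤ (1 + ν) * R := by nlinarith
  have hF0nn : 0 ≤ F 0 := by
    have := hgrowth 0 (hd0.trans hηνR)
    nlinarith [sq_nonneg (d 0)]
  -- invariance
  have hInv : ∀ r : ℕ, d r ≤ R ∧ F r ≤ F 0 := by
    intro r
    induction r with
    | zero => exact ⟨hd0.trans hηR, le_refl _⟩
    | succ n ih =>
      obtain ⟨h1, h2⟩ := ih
      rcases eq_or_lt_of_le (hdnn n) with hz | hpos
      · obtain ⟨hz1, hz2⟩ := hzero n hz.symm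
        exact ⟨hz1.le.trans hRpos.le, hz2.le.trans hF0nn⟩
      · obtain ⟨hF1, hd1, _⟩ := hstep n hpos h1
        have hd1R : d (n + 1) ≤ (1 + ν) * R := by nlinarith
        have hgrow1 := hgrowth (n + 1) hd1R
        have hFη : F (n + 1) ≤ LL * η := by
          calc F (n + 1) ≤ F n := hF1
            _ ≤ F 0 := h2
            _ ≤ LL * d 0 := hFlip
            _ ≤ LL * η := by nlinarith
        constructor
        · have h5 : d (n + 1) ^ 2 ≤ R ^ 2 := by nlinarith
          nlinarith [hdnn (n + 1)]
        · exact hF1.trans h2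
  have hdRall : ∀ r, d r ≤ R := fun r => (hInv r).1
  have hstay : ∀ s t : ℕ, s ≤ t → d s = 0 → d t = 0 := by
    intro s t hst hs
    induction t, hst using Nat.le_induction with
    | base => exact hs
    | succ n _ ih => exact (hzero n ih).1
  have hFpos : ∀ r, 0 < d r → 0 < F r := by
    intro r hdr
    have := hgrowth r ((hdRall r).trans (by nlinarith))
    have h2 : 0 < δ / 2 * d r ^ 2 := by positivity
    linarith
  set p : ℝ := -Real.log θ with hp
  have hppos : 0 < p := by
    have := Real.log_neg hθ₀ hθ₁
    rw [hp]; linarith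
  set q : ℝ := Real.log (1 + ν) with hq
  have hqpos : 0 < q := Real.log_pos honeν
  set ψ : ℕ → ℝ := fun r => p * (-Real.log (d r)) + (p + q) * (-Real.log (F r)) with hψ
  have hmain : ∀ r : ℕ, 0 < d r → ψ 0 + p ^ 2 * r ≤ ψ r := by
    intro r hne
    induction r with
    | zero => simp
    | succ n ih =>
      have hnen : 0 < d n := by
        rcases eq_or_lt_of_le (hdnn n) with hz | hpos
        · exact absurd ((hzero n hz.symm).1) (by intro h; rw [h] at hne; exact lt_irrefl 0 hne)
        · exact hpos
      have IH := ih hnen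
      have hFn : 0 < F n := hFpos n hnen
      have hFn1 : 0 < F (n + 1) := hFpos (n + 1) hne
      obtain ⟨hF1, hd1, hdich⟩ := hstep n hnen (hdRall n)
      have hu : -Real.log (d n) - q ≤ -Real.log (d (n + 1)) := by
        have h6 : Real.log (d (n + 1)) ≤ Real.log ((1 + ν) * d n) :=
          Real.log_le_log hne hd1
        rw [Real.log_mul (by linarith) hnen.ne', ← hq] at h6
        linarith
      have hw : -Real.log (F n) ≤ -Real.log (F (n + 1)) := by
        have h6 : Real.log (F (n + 1)) ≤ Real.log (F n) := Real.log_le_log hFn1 hF1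
        linarith
      have hgoal : ψ n + p ^ 2 ≤ ψ (n + 1) := by
        rcases hdich with hA | hB
        · have h6 : Real.log (F (n + 1)) ≤ Real.log (θ * F n) := Real.log_le_log hFn1 hA
          rw [Real.log_mul hθ₀.ne' hFn.ne'] at h6
          have hwA : p - Real.log (F n) ≤ -Real.log (F (n + 1)) := by
            rw [hp]; linarith
          have e1 := mul_le_mul_of_nonneg_left hu hppos.le
          have e2 := mul_le_mul_of_nonneg_left hwA (by linarith : (0:ℝ) ≤ p + q)
          simp only [hψ]
          ring_nf
          ring_nf at e1 e2
          linarith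
        · have h6 : Real.log (d (n + 1)) ≤ Real.log (θ * d n) := Real.log_le_log hne hB
          rw [Real.log_mul hθ₀.ne' hnen.ne'] at h6
          have huB : p - Real.log (d n) ≤ -Real.log (d (n + 1)) := by
            rw [hp]; linarith
          have e1 := mul_le_mul_of_nonneg_left huB hppos.le
          have e2 := mul_le_mul_of_nonneg_left hw (by linarith : (0:ℝ) ≤ p + q)
          simp only [hψ]
          ring_nf
          ring_nf at e1 e2
          linarith
      push_cast
      push_cast at IH
      linarith
  set C1 : ℝ := -Real.log (δ / 2) with hC1
  set c1 : ℝ := p * (-Real.log η) + (p + q) * (-Real.log (LL * η)) with hc1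
  set b : ℝ := p ^ 2 / (3 * p + 2 * q) with hb
  have hbpos : 0 < b := by rw [hb]; positivity
  set c0 : ℝ := (c1 - (p + q) * C1) / (3 * p + 2 * q) with hc0
  set a : ℝ := Real.exp (-c0) with ha
  have hapos : 0 < a := Real.exp_pos _
  refine ⟨a, hapos, b, hbpos, ?_⟩
  have claim : ∀ r : ℕ, d r ≤ a * Real.exp (-b * r) := by
    intro r
    rcases eq_or_lt_of_le (hdnn r) with hz | hdr
    · rw [← hz]
      positivity
    · have hd0' : 0 < d 0 := by
        rcases eq_or_lt_of_le (hdnn 0) with hz0 | h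
        · exact absurd (hstay 0 r (Nat.zero_le r) hz0.symm) (by
            intro h; rw [h] at hdr; exact lt_irrefl 0 hdr)
        · exact h
      have hF0' : 0 < F 0 := hFpos 0 hd0'
      have hψ0 : c1 ≤ ψ 0 := by
        have hu0 : -Real.log η ≤ -Real.log (d 0) := by
          have := Real.log_le_log hd0' hd0
          linarith
        have hw0 : -Real.log (LL * η) ≤ -Real.log (F 0) := by
          have hF0L : F 0 ≤ LL * η := by nlinarith
          have := Real.log_le_log hF0' hF0L
          linarith
        have e1 := mul_le_mul_of_nonneg_left hu0 hppos.le
        have e2 := mul_le_mul_of_nonneg_left hw0 (by linarith : (0:ℝ) ≤ p + q)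
        simp only [hψ, hc1]
        ring_nf
        ring_nf at e1 e2
        linarith
      have hψr : ψ r ≤ (3 * p + 2 * q) * (-Real.log (d r)) + (p + q) * C1 := by
        have hw2 : -Real.log (F r) ≤ 2 * (-Real.log (d r)) + C1 := by
          have h8 : Real.log (δ / 2 * d r ^ 2) ≤ Real.log (F r) := by
            apply Real.log_le_log (mul_pos (by linarith) (pow_pos hdr 2))
            exact hgrowth r ((hdRall r).trans (by nlinarith))
          rw [Real.log_mul (ne_of_gt (by linarith : (0:ℝ) < δ / 2))
            (ne_of_gt (pow_pos hdr 2)), Real.log_pow] at h8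
          push_cast at h8
          rw [hC1]
          linarith
        have e2 := mul_le_mul_of_nonneg_left hw2 (by linarith : (0:ℝ) ≤ p + q)
        simp only [hψ]
        ring_nf
        ring_nf at e2
        linarith
      have hur : c0 + b * r ≤ -Real.log (d r) := by
        have h9 := hmain r hdr
        have hsum : c0 + b * r = (c1 - (p + q) * C1 + p ^ 2 * r) / (3 * p + 2 * q) := by
          rw [hc0, hb]
          field_simp
        rw [hsum, div_le_iff₀ (by positivity)]
        ring_nf
        ring_nf at h9 hψ0 hψr
        linarith
      have hexp : d r = Real.exp (Real.log (d r)) := (Real.exp_log hdr).symm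
      rw [hexp, ha, ← Real.exp_add]
      apply Real.exp_le_exp.2
      linarith
  intro r
  calc d r ≤ a * Real.exp (-b * r) := claim r
    _ ≤ a * Real.exp (-b * Real.sqrt r) := by
      apply mul_le_mul_of_nonneg_left ?_ hapos.le
      apply Real.exp_le_exp.2
      have hsr : Real.sqrt (r:ℝ) ≤ r := by
        rcases Nat.eq_zero_or_pos r with h | h
        · simp [h]
        · have h1 : (1:ℝ) ≤ r := by exact_mod_cast h
          calc Real.sqrt r ≤ Real.sqrt ((r:ℝ) ^ 2) := Real.sqrt_le_sqrt (by nlinarith)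
            _ = r := Real.sqrt_sq (by positivity)
      have := mul_le_mul_of_nonneg_left hsr hbpos.le
      linarith


set_option maxHeartbeats 1600000 in
theorem stmt13 (f : E → ℝ) (hf : LocallyLipschitz f) (xbar : E)
    (δ ρ' : ℝ) (hδ : 0 < δ) (hρ' : 0 < ρ')
    (hgrow : ∀ x : E, ‖x - xbar‖ ≤ ρ' → f x - f xbar ≥ δ / 2 * ‖x - xbar‖ ^ 2)
    (μ ν θ ρ : ℝ) (hμ : 0 < μ) (hμν : μ < ν) (hθ₀ : 0 < θ) (hθ₁ : θ < 1) (hρ : 0 < ρ)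
    (hgold : ∀ x : E, 0 < ‖x - xbar‖ → ‖x - xbar‖ ≤ ρ → ∀ ε : ℝ,
      μ * ‖x - xbar‖ ≤ ε → ε ≤ ν * ‖x - xbar‖ →
      goldsteinGrad f x ε ≠ 0 ∧
      (f (x - (ε / ‖goldsteinGrad f x ε‖) • goldsteinGrad f x ε) - f xbar ≤
          θ * (f x - f xbar) ∨
        ‖x - (ε / ‖goldsteinGrad f x ε‖) • goldsteinGrad f x ε - xbar‖ ≤ θ * ‖x - xbar‖)) :
    ∃ η > 0, ∀ x : ℕ → E, ‖x 0 - xbar‖ ≤ η →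
      (∀ r : ℕ, (x r = xbar ∧ x (r + 1) = xbar) ∨
        (x r ≠ xbar ∧ ∃ ε : ℝ, μ * ‖x r - xbar‖ ≤ ε ∧ ε ≤ ν * ‖x r - xbar‖ ∧
          x (r + 1) =
            x r - (ε / ‖goldsteinGrad f (x r) ε‖) • goldsteinGrad f (x r) ε)) →
      ∃ a > 0, ∃ b > 0, ∀ r : ℕ, ‖x r - xbar‖ ≤ a * Real.exp (-b * Real.sqrt r) := by
  classical
  have hν : 0 < ν := lt_trans hμ hμν
  -- Lipschitz data near xbar
  obtain ⟨K, t, ht, hlipt⟩ := hf xbar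
  obtain ⟨r0, hr0pos, hr0sub⟩ : ∃ r0 > 0, Metric.closedBall xbar r0 ⊆ t := by
    rcases Metric.mem_nhds_iff.1 ht with ⟨r1, hr1, hsub⟩
    exact ⟨r1 / 2, by linarith, fun y hy =>
      hsub (Metric.closedBall_subset_ball (by linarith) hy)⟩
  have hlip0 : LipschitzOnWith K f (Metric.closedBall xbar r0) := hlipt.mono hr0sub
  obtain ⟨gt, hgt, heqgt⟩ := hlip0.extend_real
  set Lnn : NNReal := K + 1 with hLnn
  have hgt' : LipschitzWith Lnn gt := hgt.weaken le_self_add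
  set LL : ℝ := (Lnn : ℝ) with hLL
  have hLL1 : (1:ℝ) ≤ LL := by
    rw [hLL, hLnn]; push_cast; linarith [K.coe_nonneg]
  have hLLpos : 0 < LL := lt_of_lt_of_le one_pos hLL1
  have heqball : Set.EqOn f gt (Metric.ball xbar r0) :=
    heqgt.mono Metric.ball_subset_closedBall
  have hlipball : ∀ y : E, ‖y - xbar‖ ≤ r0 → f y - f xbar ≤ LL * ‖y - xbar‖ := by
    intro y hy
    have hymem : y ∈ Metric.closedBall xbar r0 := by rwa [Metric.mem_closedBall, dist_eq_norm]
    have hxmem : xbar ∈ Metric.closedBall xbar r0 := Metric.mem_closedBall_self hr0pos.le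
    have hd := hgt'.dist_le_mul y xbar
    rw [Real.dist_eq, dist_eq_norm] at hd
    rw [heqgt hymem, heqgt hxmem]
    have := abs_le.1 hd
    linarith [this.2]
  -- constants
  set m : ℝ := min ρ (min ρ' r0) with hm
  have hmpos : 0 < m := lt_min hρ (lt_min hρ' hr0pos)
  set R : ℝ := m / (2 * (1 + ν)) with hR
  have hRpos : 0 < R := by positivity
  have honeν : (1:ℝ) < 1 + ν := by linarith
  have hRm : R ≤ m := by
    rw [hR, div_le_iff₀ (by linarith)]
    nlinarith
  have hRρ : R ≤ ρ := hRm.trans (min_le_left _ _)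
  have hRρ' : R ≤ ρ' := hRm.trans ((min_le_right _ _).trans (min_le_left _ _))
  have hRr0 : R ≤ r0 := hRm.trans ((min_le_right _ _).trans (min_le_right _ _))
  have hνRρ' : (1 + ν) * R ≤ ρ' := by
    rw [hR, mul_div_assoc', div_le_iff₀ (by linarith)]
    have : m ≤ ρ' := (min_le_right _ _).trans (min_le_left _ _)
    nlinarith
  have hνRr0 : (1 + ν) * R < r0 := by
    rw [hR, mul_div_assoc', div_lt_iff₀ (by linarith)]
    have : m ≤ r0 := (min_le_right _ _).trans (min_le_right _ _)
    nlinarith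
  set η : ℝ := min R (δ * R ^ 2 / (2 * LL)) with hη
  have hηpos : 0 < η := lt_min hRpos (by positivity)
  refine ⟨η, hηpos, ?_⟩
  intro x hx0 hstep
  have hηR : η ≤ R := min_le_left _ _
  have hηL : LL * η ≤ δ * R ^ 2 / 2 := by
    have h1 : η ≤ δ * R ^ 2 / (2 * LL) := min_le_right _ _
    calc LL * η ≤ LL * (δ * R ^ 2 / (2 * LL)) := by
          apply mul_le_mul_of_nonneg_left h1 hLLpos.le
      _ = δ * R ^ 2 / 2 := by field_simp
  have hstay : ∀ r, x r = xbar → x (r + 1) = xbar := by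
    intro r hr
    rcases hstep r with ⟨_, h2⟩ | ⟨hne, _⟩
    · exact h2
    · exact absurd hr hne
  -- one-step facts
  have step_facts : ∀ r : ℕ, 0 < ‖x r - xbar‖ → ‖x r - xbar‖ ≤ R →
      (f (x (r + 1)) - f xbar ≤ f (x r) - f xbar ∧
        ‖x (r + 1) - xbar‖ ≤ (1 + ν) * ‖x r - xbar‖ ∧
        (f (x (r + 1)) - f xbar ≤ θ * (f (x r) - f xbar) ∨
          ‖x (r + 1) - xbar‖ ≤ θ * ‖x r - xbar‖)) := by
    intro r hdpos hdR
    have hne : x r ≠ xbar := by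
      intro h
      rw [h, sub_self, norm_zero] at hdpos
      exact lt_irrefl 0 hdpos
    rcases hstep r with ⟨h1, _⟩ | ⟨_, ε, hε1, hε2, hxr1⟩
    · exact absurd h1 hne
    have hεpos : 0 < ε := lt_of_lt_of_le (by positivity) hε1
    obtain ⟨hgne, hdich⟩ := hgold (x r) hdpos (hdR.trans hRρ) ε hε1 hε2
    have hballsub : Metric.closedBall (x r) ε ⊆ Metric.ball xbar r0 := by
      intro y hy
      rw [Metric.mem_ball]
      rw [Metric.mem_closedBall] at hy
      calc dist y xbar ≤ dist y (x r) + dist (x r) xbar := dist_triangle _ _ _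
        _ ≤ ε + ‖x r - xbar‖ := by
            apply add_le_add hy
            rw [dist_eq_norm]
        _ ≤ ν * ‖x r - xbar‖ + ‖x r - xbar‖ := by linarith
        _ = (1 + ν) * ‖x r - xbar‖ := by ring
        _ ≤ (1 + ν) * R := by nlinarith
        _ < r0 := hνRr0
    have hdesc := goldstein_descent hgt' heqball hballsub hεpos hgne
    rw [← hxr1] at hdesc
    refine ⟨by linarith, ?_, ?_⟩
    · have hsn : ‖x (r + 1) - x r‖ = ε := by
        rw [hxr1]
        have h4 : x r - (ε / ‖goldsteinGrad f (x r) ε‖) • goldsteinGrad f (x r) ε - x r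
            = -((ε / ‖goldsteinGrad f (x r) ε‖) • goldsteinGrad f (x r) ε) := by abel
        rw [h4, norm_neg, norm_smul, Real.norm_eq_abs,
          abs_of_nonneg (div_nonneg hεpos.le (norm_nonneg _)),
          div_mul_cancel₀ _ (norm_ne_zero_iff.2 hgne)]
      calc ‖x (r + 1) - xbar‖ = ‖(x (r + 1) - x r) + (x r - xbar)‖ := by
            congr 1; abel
        _ ≤ ‖x (r + 1) - x r‖ + ‖x r - xbar‖ := norm_add_le _ _
        _ = ε + ‖x r - xbar‖ := by rw [hsn]
        _ ≤ ν * ‖x r - xbar‖ + ‖x r - xbar‖ := by linarith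
        _ = (1 + ν) * ‖x r - xbar‖ := by ring
    · rcases hdich with h | h
      · left
        rw [← hxr1] at h
        exact h
      · right
        rw [← hxr1] at h
        exact h
  -- apply the abstract sequence lemma
  apply seq_rate (fun r => ‖x r - xbar‖) (fun r => f (x r) - f xbar) δ LL ν θ R η
    hδ hLLpos hν hθ₀ hθ₁ hRpos hηpos hηR hηL hx0 (fun r => norm_nonneg _)
  · intro r hr
    exact hgrow (x r) (hr.trans hνRρ')
  · exact hlipball (x 0) (hx0.trans (hηR.trans hRr0))
  · intro r hr
    have hxr : x r = xbar := by
      rw [← sub_eq_zero]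
      exact norm_eq_zero.1 hr
    have hxr1 : x (r + 1) = xbar := hstay r hxr
    constructor
    · rw [hxr1, sub_self, norm_zero]
    · rw [hxr1, sub_self]
  · intro r h1 h2
    exact step_facts r h1 h2
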